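/- Let F be an infinite field, let D₁, …, D_k be finite-dimensional F-algebras, let L be a field extension of F, and let f ∈ F⟨X₁⟩ ⊗_F ⋯ ⊗_F F⟨X_k⟩. If the partially commutative identity f = 0 holds in (D₁, …, D_k), i.e. every valuation v with vᵢ : Xᵢ → Dᵢ satisfies ṽ(f) = 0 in D₁ ⊗_F ⋯ ⊗_F D_k, then f = 0 also holds in (D₁ ⊗_F L, …, D_k ⊗_F L), i.e. every valuation w with wᵢ : Xᵢ → Dᵢ ⊗_F L satisfies w̃(f) = 0 in (D₁ ⊗_F L) ⊗_F ⋯ ⊗_F (D_k ⊗_F L). -/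

import Mathlib

open scoped TensorProduct PiTensorProduct

set_option synthInstance.maxHeartbeats 1000000
set_option maxHeartbeats 1000000

open MvPolynomial

/-- Naturality of `FreeAlgebra.lift` under composition with an algebra map. -/
private lemma algHom_comp_freeAlgebra_lift {F : Type*} [CommSemiring F] {X A B : Type*}
    [Semiring A] [Semiring B] [Algebra F A] [Algebra F B]
    (ψ : A →ₐ[F] B) (v : X → A) :
    ψ.comp (FreeAlgebra.lift F v) = FreeAlgebra.lift F (fun x => ψ (v x)) := by
  apply FreeAlgebra.hom_ext
  funext x
  simp

private lemma aeval_eq_eval' {F : Type*} [CommSemiring F] {σ : Type*} (p : σ → F)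
    (q : MvPolynomial σ F) : MvPolynomial.aeval p q = MvPolynomial.eval p q := by
  rw [← MvPolynomial.coe_aeval_eq_eval]
  rfl

/-- decomposition of an element of `M ⊗ F[σ]` into monomial components -/
private lemma tensor_mv_decomp {F : Type*} [Field F] {σ M : Type*} [AddCommGroup M] [Module F M]
    (u : M ⊗[F] MvPolynomial σ F) :
    ∃ (s : Finset (σ →₀ ℕ)) (a : (σ →₀ ℕ) → M), (∀ m ∉ s, a m = 0) ∧
      u = ∑ m ∈ s, a m ⊗ₜ[F] MvPolynomial.monomial m (1 : F) := by
  classical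
  induction u using TensorProduct.induction_on with
  | zero => exact ⟨∅, 0, fun _ _ => rfl, by simp⟩
  | tmul d q =>
      refine ⟨q.support, fun m => MvPolynomial.coeff m q • d, ?_, ?_⟩
      · intro m hm
        simp only []
        rw [MvPolynomial.notMem_support_iff.mp hm, zero_smul]
      · conv_lhs => rw [← MvPolynomial.support_sum_monomial_coeff q]
        rw [TensorProduct.tmul_sum]
        refine Finset.sum_congr rfl fun m hm => ?_
        show d ⊗ₜ[F] (MvPolynomial.monomial m) (MvPolynomial.coeff m q)
          = (MvPolynomial.coeff m q • d) ⊗ₜ[F] (MvPolynomial.monomial m) (1 : F)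
        have hmono : (MvPolynomial.monomial m) (MvPolynomial.coeff m q)
            = MvPolynomial.coeff m q • (MvPolynomial.monomial m) (1 : F) := by
          rw [MvPolynomial.smul_monomial, smul_eq_mul, mul_one]
        rw [hmono, TensorProduct.tmul_smul, TensorProduct.smul_tmul']
  | add x y hx hy =>
      obtain ⟨s1, a1, h1, e1⟩ := hx
      obtain ⟨s2, a2, h2, e2⟩ := hy
      refine ⟨s1 ∪ s2, a1 + a2, fun m hm => ?_, ?_⟩
      · have hm1 : m ∉ s1 := fun h => hm (Finset.mem_union_left _ h)
        have hm2 : m ∉ s2 := fun h => hm (Finset.mem_union_right _ h)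
        simp [h1 m hm1, h2 m hm2]
      · have e1' : x = ∑ m ∈ s1 ∪ s2, a1 m ⊗ₜ[F] MvPolynomial.monomial m (1 : F) := by
          rw [e1]
          refine Finset.sum_subset Finset.subset_union_left fun m _ hm => ?_
          rw [h1 m hm, TensorProduct.zero_tmul]
        have e2' : y = ∑ m ∈ s1 ∪ s2, a2 m ⊗ₜ[F] MvPolynomial.monomial m (1 : F) := by
          rw [e2]
          refine Finset.sum_subset Finset.subset_union_right fun m _ hm => ?_
          rw [h2 m hm, TensorProduct.zero_tmul]
        rw [e1', e2', ← Finset.sum_add_distrib]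
        refine Finset.sum_congr rfl fun m _ => ?_
        rw [Pi.add_apply, TensorProduct.add_tmul]

/-- the insertion map `u ↦ u ⊗ₜ monomial m 1` -/
private noncomputable def insMono {F : Type*} [Field F] {σ M : Type*} [AddCommGroup M]
    [Module F M] (m : σ →₀ ℕ) : M →ₗ[F] M ⊗[F] MvPolynomial σ F :=
  (TensorProduct.mk F M (MvPolynomial σ F)).flip (MvPolynomial.monomial m (1 : F))

@[simp] private lemma insMono_apply {F : Type*} [Field F] {σ M : Type*} [AddCommGroup M]
    [Module F M] (m : σ →₀ ℕ) (u : M) :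
    insMono (F := F) m u = u ⊗ₜ[F] MvPolynomial.monomial m (1 : F) := rfl

/-- decomposition of an element of `⨂ (M i ⊗ F[σ i])` into monomial components -/
private lemma piTensor_mv_decomp {F : Type*} [Field F] {k : ℕ} {σ M : Fin k → Type*}
    [∀ i, AddCommGroup (M i)] [∀ i, Module F (M i)]
    (T : ⨂[F] i, (M i ⊗[F] MvPolynomial (σ i) F)) :
    ∃ (S : Finset (Π i, σ i →₀ ℕ)) (t : (Π i, σ i →₀ ℕ) → ⨂[F] i, M i),
      T = ∑ d ∈ S, PiTensorProduct.map (fun i => insMono (d i)) (t d) := by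
  classical
  induction T using PiTensorProduct.induction_on with
  | smul_tprod r v =>
      choose s a hvan heq using fun i => tensor_mv_decomp (v i)
      refine ⟨Fintype.piFinset s, fun d => r • ⨂ₜ[F] i, a i (d i), ?_⟩
      have := (PiTensorProduct.tprod F (s := fun i => M i ⊗[F] MvPolynomial (σ i) F)
        ).map_sum_finset (fun i m => a i m ⊗ₜ[F] MvPolynomial.monomial m (1 : F)) s
      calc r • (⨂ₜ[F] i, v i)
          = r • (⨂ₜ[F] i, (∑ m ∈ s i, a i m ⊗ₜ[F] MvPolynomial.monomial m (1 : F))) := by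
            congr 1; exact congrArg _ (funext fun i => heq i)
        _ = r • ∑ d ∈ Fintype.piFinset s,
              (⨂ₜ[F] i, (a i (d i) ⊗ₜ[F] MvPolynomial.monomial (d i) (1 : F))) := by rw [this]
        _ = ∑ d ∈ Fintype.piFinset s, PiTensorProduct.map (fun i => insMono (d i))
              (r • ⨂ₜ[F] i, a i (d i)) := by
            rw [Finset.smul_sum]
            refine Finset.sum_congr rfl fun d _ => ?_
            rw [map_smul, PiTensorProduct.map_tprod]
            rfl
  | add x y hx hy =>
      obtain ⟨S1, t1, e1⟩ := hx
      obtain ⟨S2, t2, e2⟩ := hy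
      refine ⟨S1 ∪ S2,
        (fun d => (if d ∈ S1 then t1 d else 0) + (if d ∈ S2 then t2 d else 0)), ?_⟩
      have split : ∀ d ∈ S1 ∪ S2, PiTensorProduct.map (fun i => insMono (d i))
            ((if d ∈ S1 then t1 d else 0) + (if d ∈ S2 then t2 d else 0))
          = PiTensorProduct.map (fun i => insMono (d i)) (if d ∈ S1 then t1 d else 0)
            + PiTensorProduct.map (fun i => insMono (d i)) (if d ∈ S2 then t2 d else 0) :=
        fun d _ => map_add _ _ _
      rw [Finset.sum_congr rfl split, Finset.sum_add_distrib]
      have h1 : ∑ d ∈ S1 ∪ S2, PiTensorProduct.map (fun i => insMono (d i))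
            (if d ∈ S1 then t1 d else 0) = x := by
        rw [e1]
        rw [← Finset.sum_subset Finset.subset_union_left
          (fun d _ hd => by rw [if_neg hd, map_zero])]
        exact Finset.sum_congr rfl fun d hd => by rw [if_pos hd]
      have h2 : ∑ d ∈ S1 ∪ S2, PiTensorProduct.map (fun i => insMono (d i))
            (if d ∈ S2 then t2 d else 0) = y := by
        rw [e2]
        rw [← Finset.sum_subset Finset.subset_union_right
          (fun d _ hd => by rw [if_neg hd, map_zero])]
        exact Finset.sum_congr rfl fun d hd => by rw [if_pos hd]
      rw [h1, h2]

/-- `PiTensorProduct.map` of scalar multiples of the identity. -/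
private lemma piTensor_map_smul_id {F : Type*} [Field F] {k : ℕ} {M : Fin k → Type*}
    [∀ i, AddCommGroup (M i)] [∀ i, Module F (M i)] (c : Fin k → F) (t : ⨂[F] i, M i) :
    PiTensorProduct.map (fun i => c i • (LinearMap.id : M i →ₗ[F] M i)) t
      = (∏ i, c i) • t := by
  induction t using PiTensorProduct.induction_on with
  | smul_tprod r v =>
      rw [map_smul, PiTensorProduct.map_tprod]
      simp only [LinearMap.smul_apply, LinearMap.id_apply]
      rw [MultilinearMap.map_smul_univ, smul_comm]
  | add x y hx hy => rw [map_add, hx, hy, smul_add]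

private lemma prod_monomial_one {F : Type*} [CommSemiring F] {τ ι : Type*} (s : Finset ι)
    (e : ι → (τ →₀ ℕ)) :
    ∏ i ∈ s, MvPolynomial.monomial (e i) (1 : F)
      = MvPolynomial.monomial (∑ i ∈ s, e i) (1 : F) := by
  classical
  induction s using Finset.cons_induction with
  | empty => simp
  | cons i s hi ih =>
      rw [Finset.prod_cons, Finset.sum_cons, ih, MvPolynomial.monomial_mul, one_mul]

private lemma combine_monomial {F : Type*} [CommSemiring F] {k : ℕ} {σ : Fin k → Type*}
    (d : Π i, σ i →₀ ℕ) :
    MvPolynomial.monomial ((Finsupp.sigmaFinsuppEquivPiFinsupp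
        (ιs := σ) (α := ℕ)).symm d) (1 : F)
      = ∏ i, MvPolynomial.rename (Sigma.mk i) (MvPolynomial.monomial (d i) (1 : F)) := by
  classical
  simp only [MvPolynomial.rename_monomial]
  rw [prod_monomial_one]
  have harg : ((Finsupp.sigmaFinsuppEquivPiFinsupp (ιs := σ) (α := ℕ)).symm d)
      = ∑ i, Finsupp.mapDomain (Sigma.mk i) (d i) := by
    apply Finsupp.ext
    rintro ⟨i0, s0⟩
    have lhs : ((Finsupp.sigmaFinsuppEquivPiFinsupp (ιs := σ) (α := ℕ)).symm d) ⟨i0, s0⟩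
        = d i0 s0 := by
      rw [← Finsupp.sigmaFinsuppEquivPiFinsupp_apply, Equiv.apply_symm_apply]
    rw [lhs, Finsupp.finset_sum_apply]
    rw [Finset.sum_eq_single i0
      (fun i _ hne => Finsupp.mapDomain_notin_range _ _
        (by rintro ⟨s, hs⟩; exact hne (congrArg Sigma.fst hs)))
      (fun h => absurd (Finset.mem_univ i0) h)]
    rw [Finsupp.mapDomain_apply sigma_mk_injective]
  rw [harg]

/-- Linear independence over any vector space of distinct multi-monomial functions,
for an infinite field. -/
private lemma monomial_scalar_indep {F : Type*} [Field F] [Infinite F] {k : ℕ}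
    {σ : Fin k → Type*} {V : Type*} [AddCommGroup V] [Module F V]
    (S : Finset (Π i, σ i →₀ ℕ)) (t : (Π i, σ i →₀ ℕ) → V)
    (h : ∀ p : Π i, σ i → F,
      ∑ d ∈ S, (∏ i, MvPolynomial.eval (p i)
        (MvPolynomial.monomial (d i) (1 : F))) • t d = 0) :
    ∀ d ∈ S, t d = 0 := by
  classical
  intro d0 hd0
  rw [← Module.forall_dual_apply_eq_zero_iff F]
  intro φ
  set combine : (Π i, σ i →₀ ℕ) → ((Σ i, σ i) →₀ ℕ) :=
    fun d => (Finsupp.sigmaFinsuppEquivPiFinsupp (ιs := σ) (α := ℕ)).symm d with hcombine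
  have hcinj : Function.Injective combine :=
    (Finsupp.sigmaFinsuppEquivPiFinsupp (ιs := σ) (α := ℕ)).symm.injective
  set q : MvPolynomial (Σ i, σ i) F :=
    ∑ d ∈ S, MvPolynomial.monomial (combine d) (φ (t d)) with hq
  have hq0 : q = 0 := by
    apply MvPolynomial.funext
    intro p'
    rw [map_zero, hq, map_sum]
    have key := congrArg φ (h (fun i s => p' ⟨i, s⟩))
    simp only [map_sum, map_smul, smul_eq_mul, map_zero] at key
    rw [← key]
    refine Finset.sum_congr rfl fun d _ => ?_
    have e1 : MvPolynomial.eval p' (MvPolynomial.monomial (combine d) (φ (t d)))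
        = φ (t d) * MvPolynomial.eval p' (MvPolynomial.monomial (combine d) (1 : F)) := by
      rw [MvPolynomial.eval_monomial, MvPolynomial.eval_monomial, one_mul]
    have e2 : MvPolynomial.eval p' (MvPolynomial.monomial (combine d) (1 : F))
        = ∏ i, MvPolynomial.eval (fun s => p' ⟨i, s⟩)
            (MvPolynomial.monomial (d i) (1 : F)) := by
      rw [hcombine]
      rw [combine_monomial d, map_prod]
      refine Finset.prod_congr rfl fun i _ => ?_
      rw [MvPolynomial.eval_rename]
      rfl
    rw [e1, e2, mul_comm]
  have hco := congrArg (MvPolynomial.coeff (combine d0)) hq0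
  rw [hq, MvPolynomial.coeff_zero, MvPolynomial.coeff_sum] at hco
  rw [Finset.sum_eq_single d0
    (fun d _ hne => by
      rw [MvPolynomial.coeff_monomial, if_neg (fun hc => hne (hcinj hc))])
    (fun hmem => absurd hd0 hmem)] at hco
  rw [MvPolynomial.coeff_monomial, if_pos rfl] at hco
  exact hco

/-- Every element of `D ⊗ L` with `D` finite-dimensional with basis `b` is
`∑ j, b j ⊗ cc j`. -/
private lemma tensor_field_decomp {F : Type*} [Field F] {D L : Type*} [AddCommGroup D]
    [Module F D] [AddCommGroup L] [Module F L] {J : Type*} [Fintype J] (b : Module.Basis J F D)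
    (u : D ⊗[F] L) : ∃ cc : J → L, u = ∑ j, b j ⊗ₜ[F] cc j := by
  classical
  induction u using TensorProduct.induction_on with
  | zero => exact ⟨0, by simp⟩
  | tmul d l =>
      refine ⟨fun j => b.repr d j • l, ?_⟩
      conv_lhs => rw [← b.sum_repr d]
      rw [TensorProduct.sum_tmul]
      refine Finset.sum_congr rfl fun j _ => ?_
      rw [TensorProduct.smul_tmul]
  | add x y hx hy =>
      obtain ⟨c1, e1⟩ := hx
      obtain ⟨c2, e2⟩ := hy
      refine ⟨c1 + c2, ?_⟩
      rw [e1, e2, ← Finset.sum_add_distrib]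
      refine Finset.sum_congr rfl fun j _ => ?_
      rw [Pi.add_apply, TensorProduct.tmul_add]

/-- Let `F` be an infinite field, `D₁, …, D_k` finite-dimensional `F`-algebras and
`L` a field extension of `F`.  If the partially commutative identity `f = 0`
(for `f ∈ F⟨X₁⟩ ⊗_F ⋯ ⊗_F F⟨X_k⟩`) holds in `(D₁, …, D_k)`, i.e. every valuation
`v` with `vᵢ : Xᵢ → Dᵢ` satisfies `ṽ(f) = 0` in `D₁ ⊗_F ⋯ ⊗_F D_k`, then it also
holds in `(D₁ ⊗_F L, …, D_k ⊗_F L)`: every valuation `w` with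
`wᵢ : Xᵢ → Dᵢ ⊗_F L` satisfies `w̃(f) = 0` in
`(D₁ ⊗_F L) ⊗_F ⋯ ⊗_F (D_k ⊗_F L)`. -/
theorem identity_extends_to_baseChange
    (F : Type*) [Field F] [Infinite F] (k : ℕ) (X : Fin k → Type*)
    (D : Fin k → Type*) [∀ i, Ring (D i)] [∀ i, Algebra F (D i)]
    [∀ i, FiniteDimensional F (D i)]
    (L : Type*) [Field L] [Algebra F L]
    (f : ⨂[F] i, FreeAlgebra F (X i))
    (hD : ∀ v : Π i, X i → D i,
      PiTensorProduct.map (fun i => (FreeAlgebra.lift F (v i)).toLinearMap) f = 0)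
    (w : Π i, X i → (D i ⊗[F] L)) :
    PiTensorProduct.map (fun i => (FreeAlgebra.lift F (w i)).toLinearMap) f = 0 := by

  classical
  let n : Fin k → ℕ := fun i => Module.finrank F (D i)
  let b : Π i, Module.Basis (Fin (n i)) F (D i) := fun i => Module.finBasis F (D i)
  set T := PiTensorProduct.map
    (fun i => (FreeAlgebra.lift F (fun x : X i =>
      ∑ j, b i j ⊗ₜ[F] (MvPolynomial.X (⟨x, j⟩ : X i × Fin (n i)) :
        MvPolynomial (X i × Fin (n i)) F))).toLinearMap) f with hT
  obtain ⟨S, t, hdec⟩ := piTensor_mv_decomp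
    (σ := fun i => X i × Fin (n i)) (M := fun i => D i) T
  have hzero : ∀ d ∈ S, t d = 0 := by
    refine monomial_scalar_indep (F := F) (V := ⨂[F] i, D i) S t ?_
    intro p
    let ε : Π i, (D i ⊗[F] MvPolynomial (X i × Fin (n i)) F) →ₐ[F] D i := fun i =>
      (Algebra.TensorProduct.rid F F (D i)).toAlgHom.comp
        (Algebra.TensorProduct.map (AlgHom.id F (D i)) (MvPolynomial.aeval (p i)))
    have hεapply : ∀ (i : Fin k) (u : D i) (m : (X i × Fin (n i)) →₀ ℕ) (c : F),
        ε i (u ⊗ₜ[F] MvPolynomial.monomial m c)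
          = (MvPolynomial.eval (p i) (MvPolynomial.monomial m c)) • u := by
      intro i u m c
      simp only [ε, AlgHom.coe_comp, Function.comp_apply, Algebra.TensorProduct.map_tmul,
        AlgHom.coe_id, id_eq, AlgEquiv.toAlgHom_eq_coe, AlgHom.coe_coe, AlgEquiv.coe_algHom,
        Algebra.TensorProduct.rid_tmul, aeval_eq_eval']
    have h1 : PiTensorProduct.map (fun i => (ε i).toLinearMap) T = 0 := by
      rw [hT, ← LinearMap.comp_apply, ← PiTensorProduct.map_comp]
      have hstep : (fun i => (ε i).toLinearMap ∘ₗ (FreeAlgebra.lift F (fun x : X i =>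
            ∑ j, b i j ⊗ₜ[F] (MvPolynomial.X (⟨x, j⟩ : X i × Fin (n i)) :
              MvPolynomial (X i × Fin (n i)) F))).toLinearMap)
          = fun i => (FreeAlgebra.lift F
              (fun x : X i => ∑ j, p i (x, j) • b i j)).toLinearMap := by
        funext i
        rw [← AlgHom.comp_toLinearMap, algHom_comp_freeAlgebra_lift]
        have hfun : (fun x : X i => ε i (∑ j, b i j ⊗ₜ[F]
              (MvPolynomial.X (⟨x, j⟩ : X i × Fin (n i)) :
                MvPolynomial (X i × Fin (n i)) F)))
            = fun x : X i => ∑ j, p i (x, j) • b i j := by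
          funext x
          rw [map_sum]
          refine Finset.sum_congr rfl fun j _ => ?_
          simp only [ε, AlgHom.coe_comp, Function.comp_apply, Algebra.TensorProduct.map_tmul,
            AlgHom.coe_id, id_eq, AlgEquiv.toAlgHom_eq_coe, AlgHom.coe_coe, AlgEquiv.coe_algHom,
            Algebra.TensorProduct.rid_tmul, MvPolynomial.aeval_X]
        rw [hfun]
      rw [hstep]
      exact hD _
    rw [hdec, map_sum] at h1
    have h2 : ∀ d ∈ S, PiTensorProduct.map (fun i => (ε i).toLinearMap)
        (PiTensorProduct.map (fun i => insMono (d i)) (t d))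
        = (∏ i, MvPolynomial.eval (p i)
            (MvPolynomial.monomial (d i) (1 : F))) • t d := by
      intro d _
      rw [← LinearMap.comp_apply, ← PiTensorProduct.map_comp]
      have hstep : (fun i => (ε i).toLinearMap ∘ₗ insMono (d i))
          = fun i => (MvPolynomial.eval (p i) (MvPolynomial.monomial (d i) (1 : F)))
              • (LinearMap.id : D i →ₗ[F] D i) := by
        funext i
        apply LinearMap.ext
        intro u
        simp only [LinearMap.comp_apply, insMono_apply, AlgHom.toLinearMap_apply,
          LinearMap.smul_apply, LinearMap.id_apply]
        exact hεapply i u (d i) 1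
      rw [hstep, piTensor_map_smul_id]
    rw [Finset.sum_congr rfl h2] at h1
    exact h1
  have hT0 : T = 0 := by
    rw [hdec]
    refine Finset.sum_eq_zero fun d hd => ?_
    rw [hzero d hd, map_zero]
  choose cc hcc using fun i x => tensor_field_decomp (b i) (w i x)
  let η : Π i, (D i ⊗[F] MvPolynomial (X i × Fin (n i)) F) →ₐ[F] (D i ⊗[F] L) := fun i =>
    Algebra.TensorProduct.map (AlgHom.id F (D i))
      (MvPolynomial.aeval (fun m : X i × Fin (n i) => cc i m.1 m.2))
  have hw : (fun i => (FreeAlgebra.lift F (w i)).toLinearMap)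
      = fun i => (η i).toLinearMap ∘ₗ (FreeAlgebra.lift F (fun x : X i =>
          ∑ j, b i j ⊗ₜ[F] (MvPolynomial.X (⟨x, j⟩ : X i × Fin (n i)) :
            MvPolynomial (X i × Fin (n i)) F))).toLinearMap := by
    funext i
    rw [← AlgHom.comp_toLinearMap, algHom_comp_freeAlgebra_lift]
    have hfun : (fun x : X i => η i (∑ j, b i j ⊗ₜ[F]
          (MvPolynomial.X (⟨x, j⟩ : X i × Fin (n i)) :
            MvPolynomial (X i × Fin (n i)) F)))
        = w i := by
      funext x
      rw [map_sum, hcc i x]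
      refine Finset.sum_congr rfl fun j _ => ?_
      simp only [η, Algebra.TensorProduct.map_tmul, AlgHom.coe_id, id_eq,
        MvPolynomial.aeval_X]
    rw [hfun]
  rw [hw, PiTensorProduct.map_comp, LinearMap.comp_apply, ← hT, hT0, map_zero]
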